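/- (Hilbert–Mumford criterion for abelian groups acting linearly) Let A = exp(𝔞) with 𝔞 an abelian algebra of symmetric endomorphisms of V, and let x ∈ V. If u ∈ closure(A·x), then there exist ξ ∈ 𝔞 and a ∈ A such that lim_{t→+∞} exp(tξ)·(a x) = u. -/

import Mathlib

open RealInnerProductSpace Filter Topology

open Module.End in
private lemma exp_apply_eigen' {V : Type*} [NormedAddCommGroup V] [NormedSpace ℝ V]
    [CompleteSpace V] (A : V →L[ℝ] V) (v : V) (c : ℝ) (h : A v = c • v) :
    NormedSpace.exp A v = Real.exp c • v := by
  have hpow : ∀ n : ℕ, (A ^ n) v = c ^ n • v := by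
    intro n
    induction n with
    | zero => simp
    | succ n ih => rw [pow_succ, pow_succ, ContinuousLinearMap.mul_apply, h, map_smul, ih,
        smul_smul, mul_comm]
  have hsum : Summable fun n : ℕ => ((Nat.factorial n : ℝ))⁻¹ • A ^ n :=
    NormedSpace.expSeries_summable' A
  have h1 : NormedSpace.exp A v = ∑' n : ℕ, ((Nat.factorial n : ℝ))⁻¹ • (A ^ n) v := by
    rw [NormedSpace.exp_eq_tsum ℝ]
    exact ((ContinuousLinearMap.apply ℝ V v).map_tsum hsum).trans (by simp)
  rw [h1]
  have h2 : ∀ n : ℕ, ((Nat.factorial n : ℝ))⁻¹ • (A ^ n) v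
      = (((Nat.factorial n : ℝ))⁻¹ * c ^ n) • v := by
    intro n; rw [hpow, smul_smul]
  rw [tsum_congr h2, Summable.tsum_smul_const, Real.exp_eq_exp_ℝ, NormedSpace.exp_eq_tsum ℝ]
  · congr 1
  · exact (NormedSpace.expSeries_summable' (𝕂 := ℝ) c).congr (fun n => by simp [smul_eq_mul])

set_option maxHeartbeats 2000000 in
/-- Hilbert-Mumford criterion for abelian groups acting linearly: every point of the closure of
an orbit `A·x` is reached as the limit of a one-parameter subgroup applied to a point of the
orbit. -/
theorem hilbert_mumford_abelian
    (V : Type*) [NormedAddCommGroup V] [InnerProductSpace ℝ V] [FiniteDimensional ℝ V]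
    (𝔞 : Submodule ℝ (V →L[ℝ] V))
    (hsym : ∀ ξ : 𝔞, ∀ v w : V, ⟪(ξ : V →L[ℝ] V) v, w⟫ = ⟪v, (ξ : V →L[ℝ] V) w⟫)
    (habelian : ∀ ξ η : 𝔞, (ξ : V →L[ℝ] V) * η = (η : V →L[ℝ] V) * ξ)
    (x u : V)
    (hu : u ∈ closure {y : V | ∃ ξ : 𝔞, y = NormedSpace.exp (ξ : V →L[ℝ] V) x}) :
    ∃ (ξ η : 𝔞), Tendsto
      (fun t : ℝ => NormedSpace.exp (t • (ξ : V →L[ℝ] V))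
        (NormedSpace.exp (η : V →L[ℝ] V) x)) atTop (nhds u) := by
  classical
  obtain ⟨y, hy1, hy2⟩ := mem_closure_iff_seq_limit.mp hu
  choose ξs hξs using hy1
  -- simultaneous diagonalization of 𝔞
  set k := Module.finrank ℝ 𝔞 with hk
  set 𝔟 : Module.Basis (Fin k) ℝ 𝔞 := Module.finBasis ℝ 𝔞 with h𝔟
  set T : Fin k → Module.End ℝ V := fun i => ((𝔟 i : V →L[ℝ] V) : V →ₗ[ℝ] V) with hT
  have hTsym : ∀ i, (T i).IsSymmetric := fun i v w => hsym (𝔟 i) v w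
  have hTcomm : Pairwise (Function.onFun Commute T) := by
    intro i j _
    show T i * T j = T j * T i
    have h := habelian (𝔟 i) (𝔟 j)
    ext v
    exact congrArg (fun f : V →L[ℝ] V => f v) h
  set Esp : (Fin k → ℝ) → Submodule ℝ V :=
    fun χ => ⨅ i, Module.End.eigenspace (T i) (χ i) with hEsp
  have hInternal : DirectSum.IsInternal Esp := by
    rw [OrthogonalFamily.isInternal_iff]
    · rw [LinearMap.IsSymmetric.iSup_iInf_eq_top_of_commute hTsym hTcomm,
        Submodule.top_orthogonal_eq_bot]
    · exact LinearMap.IsSymmetric.orthogonalFamily_iInf_eigenspaces hTsym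
  set bE : ∀ χ, Module.Basis (Fin (Module.finrank ℝ (Esp χ))) ℝ (Esp χ) :=
    fun χ => Module.finBasis ℝ _ with hbE
  set B := hInternal.collectedBasis bE with hB
  have hmem : ∀ j, B j ∈ Esp j.1 := fun j => hInternal.collectedBasis_mem bE j
  -- the weight functionals
  set F : (Σ χ : Fin k → ℝ, Fin (Module.finrank ℝ (Esp χ))) → (𝔞 →ₗ[ℝ] ℝ) :=
    fun j => ∑ i, j.1 i • (𝔟.coord i) with hFdef
  have hF : ∀ (ξ : 𝔞) j, (ξ : V →L[ℝ] V) (B j) = F j ξ • B j := by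
    intro ξ j
    have heig : ∀ i, T i (B j) = j.1 i • B j := by
      intro i
      have := (Submodule.mem_iInf _).mp (hmem j) i
      exact (Module.End.mem_eigenspace_iff).mp this
    have h0 : (ξ : V →L[ℝ] V) = ∑ i, 𝔟.repr ξ i • ((𝔟 i : 𝔞) : V →L[ℝ] V) := by
      have := congrArg (fun z : 𝔞 => (z : V →L[ℝ] V)) (𝔟.sum_repr ξ)
      simpa only [Submodule.coe_sum, Submodule.coe_smul] using this.symm
    rw [h0]
    simp only [ContinuousLinearMap.coe_sum', Finset.sum_apply, ContinuousLinearMap.coe_smul',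
      Pi.smul_apply]
    have hh : ∀ i, ((𝔟 i : 𝔞) : V →L[ℝ] V) (B j) = j.1 i • B j := fun i => heig i
    simp only [hh, hFdef]
    rw [LinearMap.sum_apply]
    rw [Finset.sum_smul]
    congr 1
    ext i
    simp [smul_smul, mul_comm]
  have hFexp : ∀ (ξ : 𝔞) j, NormedSpace.exp (ξ : V →L[ℝ] V) (B j) = Real.exp (F j ξ) • B j :=
    fun ξ j => exp_apply_eigen' _ _ _ (hF ξ j)
  -- decomposition of x and of exp ξ x
  set r : _ → ℝ := fun j => B.repr x j with hr
  set S := (B.repr x).support with hS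
  have hexpx : ∀ ξ : 𝔞, NormedSpace.exp (ξ : V →L[ℝ] V) x
      = ∑ j ∈ S, (Real.exp (F j ξ) * r j) • B j := by
    intro ξ
    conv_lhs => rw [← B.linearCombination_repr x, Finsupp.linearCombination_apply, Finsupp.sum]
    rw [map_sum]
    refine Finset.sum_congr rfl fun j hj => ?_
    rw [map_smul, hFexp, smul_smul, mul_comm]
  have hrepr_exp : ∀ (ξ : 𝔞) j, B.repr (NormedSpace.exp (ξ : V →L[ℝ] V) x) j
      = Real.exp (F j ξ) * r j := by
    intro ξ j
    rw [hexpx, map_sum]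
    rw [Finsupp.finset_sum_apply]
    by_cases hjS : j ∈ S
    · rw [Finset.sum_eq_single j]
      · simp
      · intro j' _ hj'
        simp [Module.Basis.repr_self, Finsupp.single_apply, hj']
      · intro h; exact absurd hjS h
    · have hrj : r j = 0 := by
        simpa [hr] using Finsupp.notMem_support_iff.mp hjS
      rw [hrj, mul_zero]
      apply Finset.sum_eq_zero
      intro j' hj'
      have hne : j' ≠ j := fun h => hjS (h ▸ hj')
      simp [Module.Basis.repr_self, Finsupp.single_apply, hne]
  -- coordinates of u
  set ru : _ → ℝ := fun j => B.repr u j with hru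
  have hylim : ∀ j, Tendsto (fun n => Real.exp (F j (ξs n)) * r j) atTop (𝓝 (ru j)) := by
    intro j
    have hc : Continuous fun v : V => B.repr v j := by
      have := LinearMap.continuous_of_finiteDimensional (B.coord j)
      convert this using 1
      ext v
      simp [Module.Basis.coord_apply]
    have h1 := (hc.tendsto u).comp hy2
    refine h1.congr fun n => ?_
    show B.repr (y n) j = _
    rw [hξs n, hrepr_exp]
  have hru_notS : ∀ j, j ∉ S → ru j = 0 := by
    intro j hj
    have hrj : r j = 0 := by simpa [hr] using Finsupp.notMem_support_iff.mp hj
    have h0 : Tendsto (fun _ : ℕ => (0:ℝ)) atTop (𝓝 (ru j)) := by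
      simpa [hrj] using hylim j
    exact tendsto_nhds_unique h0 tendsto_const_nhds
  have hclim : ∀ j ∈ S, Tendsto (fun n => Real.exp (F j (ξs n))) atTop (𝓝 (ru j / r j)) := by
    intro j hj
    have hrj : r j ≠ 0 := by simpa [hr] using Finsupp.mem_support_iff.mp hj
    refine ((hylim j).div_const (r j)).congr fun n => ?_
    rw [mul_div_assoc, div_self hrj, mul_one]
  have hcpos : ∀ j ∈ S, 0 ≤ ru j / r j := fun j hj =>
    ge_of_tendsto' (hclim j hj) (fun n => (Real.exp_pos _).le)
  set S0 := S.filter (fun j => ru j ≠ 0) with hS0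
  set Sm := S.filter (fun j => ru j = 0) with hSm
  have hlog : ∀ j ∈ S0, Tendsto (fun n => F j (ξs n)) atTop (𝓝 (Real.log (ru j / r j))) := by
    intro j hj
    obtain ⟨hjS, hjne⟩ := Finset.mem_filter.mp hj
    have hrj : r j ≠ 0 := by simpa [hr] using Finsupp.mem_support_iff.mp hjS
    have hcne : ru j / r j ≠ 0 := div_ne_zero hjne hrj
    have h1 := ((Real.continuousAt_log hcne).tendsto).comp (hclim j hjS)
    refine h1.congr fun n => ?_
    show Real.log (Real.exp (F j (ξs n))) = _
    rw [Real.log_exp]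
  have hbot : ∀ j ∈ Sm, Tendsto (fun n => F j (ξs n)) atTop atBot := by
    intro j hj
    obtain ⟨hjS, hj0⟩ := Finset.mem_filter.mp hj
    have h1 := hclim j hjS
    rw [hj0, zero_div] at h1
    exact Real.tendsto_exp_comp_nhds_zero.mp h1
  -- part (a) : realize the limit weights on S0
  set Φ0 : 𝔞 →ₗ[ℝ] ({j // j ∈ S0} → ℝ) := LinearMap.pi (fun j0 => F j0.1) with hΦ0
  set ℓ : {j // j ∈ S0} → ℝ := fun j0 => Real.log (ru j0.1 / r j0.1) with hℓ
  have hΦlim : Tendsto (fun n => Φ0 (ξs n)) atTop (𝓝 ℓ) :=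
    tendsto_pi_nhds.mpr fun j0 => hlog j0.1 j0.2
  have hclosed : IsClosed ((LinearMap.range Φ0 : Submodule ℝ _) : Set ({j // j ∈ S0} → ℝ)) :=
    Submodule.closed_of_finiteDimensional _
  have hmemrange : ℓ ∈ LinearMap.range Φ0 :=
    hclosed.mem_of_tendsto hΦlim (Eventually.of_forall fun n => ⟨ξs n, rfl⟩)
  obtain ⟨η, hη⟩ := LinearMap.mem_range.mp hmemrange
  -- part (b) : a direction strictly decreasing on Sm, constant on S0
  have hb : ∃ ζ : 𝔞, (∀ j ∈ S0, F j ζ = 0) ∧ (∀ j ∈ Sm, F j ζ < 0) := by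
    by_contra hcon
    push_neg at hcon
    set K : Submodule ℝ 𝔞 := ⨅ j0 : {j // j ∈ S0}, LinearMap.ker (F j0.1) with hK
    set Ψ : 𝔞 →ₗ[ℝ] ({j // j ∈ Sm} → ℝ) := LinearMap.pi (fun jm => F jm.1) with hΨ
    set D := K.map Ψ with hD
    set O : Set ({j // j ∈ Sm} → ℝ) := Set.univ.pi (fun _ => Set.Iio (0:ℝ)) with hO
    have hOopen : IsOpen O := isOpen_set_pi Set.finite_univ (fun _ _ => isOpen_Iio)
    have hOconv : Convex ℝ O := convex_pi fun _ _ => convex_Iio 0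
    have hdisj : Disjoint O (D : Set ({j // j ∈ Sm} → ℝ)) := by
      rw [Set.disjoint_left]
      rintro yv hyO hyD
      obtain ⟨ζ, hζK, rfl⟩ := Submodule.mem_map.mp hyD
      have h1 : ∀ j ∈ S0, F j ζ = 0 := by
        intro j hj
        exact (Submodule.mem_iInf _).mp hζK ⟨j, hj⟩
      obtain ⟨j, hjSm, hge⟩ := hcon ζ h1
      have h2 := hyO ⟨j, hjSm⟩ (Set.mem_univ _)
      have h3 : F j ζ < 0 := h2
      exact absurd h3 (not_lt.mpr hge)
    obtain ⟨f, u0, hfO, hfD⟩ :=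
      geometric_hahn_banach_open hOconv hOopen D.convex hdisj
    have hfD0 : ∀ d, d ∈ D → f d = (0:ℝ) := by
      intro d hd
      by_contra hne
      have hmem2 : ((u0 - 1) / f d) • d ∈ D := Submodule.smul_mem _ _ hd
      have h2 := hfD _ hmem2
      rw [map_smul, smul_eq_mul, div_mul_cancel₀ _ hne] at h2
      linarith
    have hu0 : u0 ≤ 0 := by
      have := hfD 0 (Submodule.zero_mem D)
      simpa using this
    set sgl : {j // j ∈ Sm} → ({j // j ∈ Sm} → ℝ) := fun m => Pi.single m (1:ℝ) with hsgl
    have hyv : ∀ yv : {j // j ∈ Sm} → ℝ, yv = ∑ m, yv m • sgl m := by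
      intro yv
      funext m'
      rw [Finset.sum_apply]
      simp [hsgl, Pi.single_apply]
    have hlam : ∀ m : {j // j ∈ Sm}, 0 ≤ f (sgl m) := by
      intro m
      by_contra hneg
      push_neg at hneg
      set a := f (sgl m) with ha
      set b := f (fun _ => (1:ℝ)) with hbb
      set t := max 1 ((u0 + b + 1) / (-a)) with ht
      have hapos : 0 < -a := neg_pos.mpr hneg
      have ht1 : (1:ℝ) ≤ t := le_max_left _ _
      have htpos : 0 < t := lt_of_lt_of_le one_pos ht1
      set w : {j // j ∈ Sm} → ℝ := -(t • sgl m) - fun _ => (1:ℝ) with hw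
      have hwO : w ∈ O := by
        intro m' _
        show w m' < 0
        rw [hw]
        simp only [Pi.sub_apply, Pi.neg_apply, Pi.smul_apply, smul_eq_mul, hsgl]
        by_cases hmm : m' = m
        · subst hmm; rw [Pi.single_eq_same]; linarith
        · rw [Pi.single_eq_of_ne hmm]; simp
      have h2 := hfO _ hwO
      have h3 : f w = -(t * a) - b := by
        rw [hw, map_sub, map_neg, map_smul, smul_eq_mul]
      rw [h3] at h2
      have h4 : (u0 + b + 1) / (-a) ≤ t := le_max_right _ _
      have h5 : (u0 + b + 1) ≤ t * (-a) := (div_le_iff₀ hapos).mp h4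
      nlinarith
    have hone : f (fun _ => (-1:ℝ)) < u0 := by
      apply hfO
      intro m _
      show (-1:ℝ) < 0
      norm_num
    have hfpos : 0 < f (fun _ => (1:ℝ)) := by
      have hkey : (fun _ : {j // j ∈ Sm} => (-1:ℝ)) = -(fun _ : {j // j ∈ Sm} => (1:ℝ)) := by
        funext m'
        simp
      rw [hkey, map_neg] at hone
      linarith
    have hcoordf : ∀ yv : {j // j ∈ Sm} → ℝ, f yv = ∑ m, yv m * f (sgl m) := by
      intro yv
      conv_lhs => rw [hyv yv]
      rw [map_sum]
      exact Finset.sum_congr rfl fun m _ => by rw [map_smul, smul_eq_mul]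
    have hexistm : ∃ m, 0 < f (sgl m) := by
      by_contra hall
      push_neg at hall
      have hsum0 : f (fun _ => (1:ℝ)) ≤ 0 := by
        rw [hcoordf (fun _ => (1:ℝ))]
        refine Finset.sum_nonpos fun m _ => ?_
        rw [one_mul]
        exact hall m
      linarith
    obtain ⟨m0, hm0⟩ := hexistm
    set g : 𝔞 →ₗ[ℝ] ℝ := (f : ({j // j ∈ Sm} → ℝ) →ₗ[ℝ] ℝ).comp Ψ with hg
    have hgker : LinearMap.ker Φ0 ≤ LinearMap.ker g := by
      intro z hz
      have hz' : Φ0 z = 0 := LinearMap.mem_ker.mp hz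
      have hzK : z ∈ K := by
        rw [hK, Submodule.mem_iInf]
        intro j0
        exact LinearMap.mem_ker.mpr (congrFun hz' j0)
      have hfz : f (Ψ z) = 0 := hfD0 _ (Submodule.mem_map_of_mem hzK)
      exact LinearMap.mem_ker.mpr hfz
    obtain ⟨q, hq⟩ := Submodule.exists_isCompl (LinearMap.range Φ0)
    set π := (LinearMap.range Φ0).linearProjOfIsCompl q hq with hπ
    set μ : ({j // j ∈ S0} → ℝ) →ₗ[ℝ] ℝ :=
      ((Submodule.liftQ (LinearMap.ker Φ0) g hgker).comp
        (Φ0.quotKerEquivRange.symm : (LinearMap.range Φ0) →ₗ[ℝ] _)).comp π with hμ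
    have hfact : ∀ z : 𝔞, μ (Φ0 z) = g z := by
      intro z
      have h1 : π (Φ0 z) = ⟨Φ0 z, LinearMap.mem_range_self _ z⟩ :=
        Submodule.linearProjOfIsCompl_apply_left hq ⟨Φ0 z, LinearMap.mem_range_self _ z⟩
      simp only [hμ, LinearMap.comp_apply]
      rw [h1]
      have h2 : Φ0.quotKerEquivRange.symm ⟨Φ0 z, LinearMap.mem_range_self _ z⟩
          = Submodule.Quotient.mk z := by
        rw [LinearEquiv.symm_apply_eq]
        exact Subtype.ext (LinearMap.quotKerEquivRange_apply_mk Φ0 z).symm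
      show Submodule.liftQ (LinearMap.ker Φ0) g hgker
        (Φ0.quotKerEquivRange.symm ⟨Φ0 z, LinearMap.mem_range_self _ z⟩) = g z
      rw [h2, Submodule.liftQ_apply]
    have hglim : Tendsto (fun n => g (ξs n)) atTop (𝓝 (μ ℓ)) := by
      have hc : Continuous μ := μ.continuous_of_finiteDimensional
      have h1 := (hc.tendsto ℓ).comp hΦlim
      refine h1.congr fun n => ?_
      exact hfact (ξs n)
    have hgbot : Tendsto (fun n => g (ξs n)) atTop atBot := by
      have hev : ∀ᶠ n in atTop, ∀ m : {j // j ∈ Sm}, F m.1 (ξs n) ≤ 0 :=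
        eventually_all.mpr fun m => (hbot m.1 m.2).eventually_le_atBot 0
      have hmain : Tendsto (fun n => F m0.1 (ξs n) * f (sgl m0)) atTop atBot :=
        (tendsto_mul_const_atBot_of_pos hm0).mpr (hbot m0.1 m0.2)
      refine tendsto_atBot_mono' atTop ?_ hmain
      filter_upwards [hev] with n hn
      have hform : g (ξs n) = ∑ m, F m.1 (ξs n) * f (sgl m) := by
        show f (Ψ (ξs n)) = _
        rw [hcoordf]
        rfl
      rw [hform]
      calc ∑ m, F m.1 (ξs n) * f (sgl m)
          ≤ ∑ m : {j // j ∈ Sm},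
            (if m = m0 then F m0.1 (ξs n) * f (sgl m0) else 0) := by
            refine Finset.sum_le_sum fun m _ => ?_
            by_cases hmm : m = m0
            · subst hmm; simp
            · rw [if_neg hmm]
              exact mul_nonpos_iff.mpr (Or.inr ⟨hn m, hlam m⟩)
        _ = F m0.1 (ξs n) * f (sgl m0) := by simp
    exact (not_tendsto_atBot_of_tendsto_nhds hglim) hgbot
  obtain ⟨ζ, hζ0, hζneg⟩ := hb
  refine ⟨ζ, η, ?_⟩
  have hfun : ∀ t : ℝ, NormedSpace.exp (t • (ζ : V →L[ℝ] V))
      (NormedSpace.exp (η : V →L[ℝ] V) x)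
      = ∑ j ∈ S, (Real.exp (t * F j ζ) * (Real.exp (F j η) * r j)) • B j := by
    intro t
    rw [hexpx η, map_sum]
    refine Finset.sum_congr rfl fun j hj => ?_
    rw [map_smul]
    have hcoe : (t • (ζ : V →L[ℝ] V)) = ((t • ζ : 𝔞) : V →L[ℝ] V) := rfl
    rw [hcoe, hFexp (t • ζ) j]
    rw [show (F j) (t • ζ) = t * (F j) ζ by rw [map_smul, smul_eq_mul]]
    rw [smul_smul, mul_comm]
  have hsub : (B.repr u).support ⊆ S := by
    intro j hj
    by_contra hjS
    exact (Finsupp.mem_support_iff.mp hj) (hru_notS j hjS)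
  have husum : u = ∑ j ∈ S, ru j • B j := by
    conv_lhs => rw [← B.linearCombination_repr u, Finsupp.linearCombination_apply, Finsupp.sum]
    refine Finset.sum_subset hsub fun j _ hjn => ?_
    have hz0 : (B.repr u) j = 0 := Finsupp.notMem_support_iff.mp hjn
    show (B.repr u) j • B j = 0
    rw [hz0, zero_smul]
  rw [show (nhds u) = nhds (∑ j ∈ S, ru j • B j) by rw [← husum]]
  refine Tendsto.congr (fun t => (hfun t).symm) ?_
  apply tendsto_finset_sum
  intro j hj
  by_cases hjm : ru j = 0
  · have hjSm : j ∈ Sm := Finset.mem_filter.mpr ⟨hj, hjm⟩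
    have hneg := hζneg j hjSm
    have h1 : Tendsto (fun t : ℝ => Real.exp (t * F j ζ)) atTop (𝓝 0) := by
      apply Real.tendsto_exp_atBot.comp
      exact (tendsto_mul_const_atBot_of_neg hneg).mpr tendsto_id
    have h2 := (h1.mul_const (Real.exp (F j η) * r j)).smul_const (B j)
    have hjm' : (B.repr u) j = 0 := hjm
    rw [show ru j • B j = (0:V) by rw [hjm, zero_smul]]
    simpa using h2
  · have hjS0 : j ∈ S0 := Finset.mem_filter.mpr ⟨hj, hjm⟩
    have hz := hζ0 j hjS0
    have hηj : F j η = Real.log (ru j / r j) := congrFun hη ⟨j, hjS0⟩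
    have hrj : r j ≠ 0 := by simpa [hr] using Finsupp.mem_support_iff.mp hj
    have hcpos' : 0 < ru j / r j := lt_of_le_of_ne (hcpos j hj) (Ne.symm (div_ne_zero hjm hrj))
    have hconst : ∀ t : ℝ, (Real.exp (t * F j ζ) * (Real.exp (F j η) * r j)) • B j
        = ru j • B j := by
      intro t
      rw [hz, mul_zero, Real.exp_zero, one_mul, hηj, Real.exp_log hcpos',
        div_mul_cancel₀ _ hrj]
    exact Tendsto.congr (fun t => (hconst t).symm) tendsto_const_nhds
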